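/- Let n ≥ 3 be an integer, ℓ > 0, r₀ > 0, a ∈ ℝ, Λ ∈ ℝ, r₊ > 0, and define V : (0,∞) → ℝ by V(r) = (r²/ℓ²)(1 + a/r^{n−1} − r₀ⁿ/rⁿ). Then the function r ↦ 2·(V''(r) + (n−2)V'(r)/r)·V(r) + V'(r)² + (8Λ/(n−1))·V(r) is NOT constant on the interval (r₊, ∞). (Equivalently: if this function were constant there, one would need both n + 2Λℓ²/(n−1) = 0 and −r₀ⁿ = 0, contradicting r₀ > 0.) -/

import Mathlib

set_option maxHeartbeats 2000000

/-- Explicit Laurent form of V on (0,∞). -/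
noncomputable def Wf0 (ℓ a b : ℝ) (m : ℕ) : ℝ → ℝ := fun r =>
  (1/ℓ^2) * r^2 + (a/ℓ^2) * r^(-(m:ℤ)) + (b/ℓ^2) * r^(-(m:ℤ)-1)

/-- Explicit first derivative. -/
noncomputable def Wf1 (ℓ a b : ℝ) (m : ℕ) : ℝ → ℝ := fun r =>
  (1/ℓ^2) * (2*r) + (a*(-(m:ℝ))/ℓ^2) * r^(-(m:ℤ)-1)
    + (b*(-(m:ℝ)-1)/ℓ^2) * r^(-(m:ℤ)-1-1)

/-- Explicit second derivative. -/
noncomputable def Wf2 (ℓ a b : ℝ) (m : ℕ) : ℝ → ℝ := fun r =>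
  (1/ℓ^2) * 2 + (a*(-(m:ℝ))*(-(m:ℝ)-1)/ℓ^2) * r^(-(m:ℤ)-1-1)
    + (b*(-(m:ℝ)-1)*(-(m:ℝ)-2)/ℓ^2) * r^(-(m:ℤ)-1-1-1)

lemma Wf0_hasDerivAt (ℓ a b : ℝ) (m : ℕ) (r : ℝ) (hr : r ≠ 0) :
    HasDerivAt (Wf0 ℓ a b m) (Wf1 ℓ a b m r) r := by
  have h1 := (hasDerivAt_pow 2 r).const_mul (1/ℓ^2)
  have h2 := (hasDerivAt_zpow (-(m:ℤ)) r (Or.inl hr)).const_mul (a/ℓ^2)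
  have h3 := (hasDerivAt_zpow (-(m:ℤ)-1) r (Or.inl hr)).const_mul (b/ℓ^2)
  have h := (h1.add h2).add h3
  refine h.congr_deriv ?_
  simp only [Wf1]
  push_cast
  ring

lemma Wf1_hasDerivAt (ℓ a b : ℝ) (m : ℕ) (r : ℝ) (hr : r ≠ 0) :
    HasDerivAt (Wf1 ℓ a b m) (Wf2 ℓ a b m r) r := by
  have h1 : HasDerivAt (fun x : ℝ => (1/ℓ^2) * (2*x)) ((1/ℓ^2) * 2) r := by
    have := ((hasDerivAt_id r).const_mul (2:ℝ)).const_mul (1/ℓ^2)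
    refine this.congr_deriv ?_
    ring
  have h2 := (hasDerivAt_zpow (-(m:ℤ)-1) r (Or.inl hr)).const_mul (a*(-(m:ℝ))/ℓ^2)
  have h3 := (hasDerivAt_zpow (-(m:ℤ)-1-1) r (Or.inl hr)).const_mul (b*(-(m:ℝ)-1)/ℓ^2)
  have h := (h1.add h2).add h3
  refine h.congr_deriv ?_
  simp only [Wf2]
  push_cast
  ring

lemma zpow_neg_nat_one (r : ℝ) (m : ℕ) : r^(-(m:ℤ)-1) = (r^(m+1))⁻¹ := by
  rw [show -(m:ℤ)-1 = -((m+1 : ℕ) : ℤ) by push_cast; ring, zpow_neg, zpow_natCast]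

lemma zpow_neg_nat_two (r : ℝ) (m : ℕ) : r^(-(m:ℤ)-1-1) = (r^(m+2))⁻¹ := by
  rw [show -(m:ℤ)-1-1 = -((m+2 : ℕ) : ℤ) by push_cast; ring, zpow_neg, zpow_natCast]

lemma zpow_neg_nat_three (r : ℝ) (m : ℕ) : r^(-(m:ℤ)-1-1-1) = (r^(m+3))⁻¹ := by
  rw [show -(m:ℤ)-1-1-1 = -((m+3 : ℕ) : ℤ) by push_cast; ring, zpow_neg, zpow_natCast]

lemma zpow_neg_nat_zero (r : ℝ) (m : ℕ) : r^(-(m:ℤ)) = (r^m)⁻¹ := by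
  rw [zpow_neg, zpow_natCast]

/-- The key algebraic identity: clearing denominators turns the constancy equation
into a polynomial identity. -/
lemma key_id (ℓ a b Λ C : ℝ) (m : ℕ) (hℓ : ℓ ≠ 0) (r : ℝ) (hr : r ≠ 0) :
    (2 * (Wf2 ℓ a b m r + ((m:ℝ) + 3 - 2) * Wf1 ℓ a b m r / r) * Wf0 ℓ a b m r
        + (Wf1 ℓ a b m r)^2 + 8 * Λ / ((m:ℝ) + 3 - 1) * Wf0 ℓ a b m r - C)
      * (ℓ^4 * ((m:ℝ)+2) * r^(2*m+4))
    = (4*((m:ℝ)+3)*((m:ℝ)+2) + 8*Λ*ℓ^2) * r^(2*m+6)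
      + a*(8*((m:ℝ)+2) + 8*Λ*ℓ^2) * r^(m+4)
      + b*(2*((m:ℝ)+3)*((m:ℝ)+2) + 8*Λ*ℓ^2) * r^(m+3)
      + ((m:ℝ)+2)*a^2*(m:ℝ)^2 * r^2
      + 2*a*b*((m:ℝ)+2)*((m:ℝ)+1)^2 * r
      + ((m:ℝ)+2)*((m:ℝ)+3)*((m:ℝ)+1)*b^2
      - ℓ^4*((m:ℝ)+2)*C * r^(2*m+4) := by
  have hm : (0:ℝ) ≤ (m:ℝ) := Nat.cast_nonneg m
  have hm2 : ((m:ℝ) + 3 - 1) ≠ 0 := by intro h; nlinarith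
  simp only [Wf0, Wf1, Wf2, zpow_neg_nat_zero, zpow_neg_nat_one, zpow_neg_nat_two,
    zpow_neg_nat_three]
  field_simp
  ring

/-- for V(r) = (r²/ℓ²)(1 + a/r^{n−1} − r₀ⁿ/rⁿ) with r₀ > 0, the function
2(V'' + (n−2)V'/r)V + (V')² + (8Λ/(n−1))V is not constant on (r₊, ∞). -/
theorem stmt_5 (n : ℕ) (hn : 3 ≤ n) (ℓ r₀ : ℝ) (hℓ : 0 < ℓ) (hr₀ : 0 < r₀) (a Λ : ℝ)
    (rp : ℝ) (hrp : 0 < rp)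
    (V : ℝ → ℝ)
    (hV : ∀ r > (0 : ℝ), V r = r ^ 2 / ℓ ^ 2 * (1 + a / r ^ (n - 1) - r₀ ^ n / r ^ n)) :
    ¬ ∃ C : ℝ, ∀ r > rp,
      2 * (deriv (deriv V) r + ((n : ℝ) - 2) * deriv V r / r) * V r
        + (deriv V r) ^ 2 + (8 * Λ / ((n : ℝ) - 1)) * V r = C := by
  rintro ⟨C, hC⟩
  obtain ⟨m, rfl⟩ : ∃ m, n = m + 3 := ⟨n - 3, by omega⟩
  have hℓ' : (ℓ : ℝ) ≠ 0 := hℓ.ne'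
  set b : ℝ := -(r₀^(m+3)) with hb
  have hVW : ∀ r > (0:ℝ), V r = Wf0 ℓ a b m r := by
    intro r hr
    have hr' : r ≠ 0 := hr.ne'
    rw [hV r hr]
    simp only [Wf0, zpow_neg_nat_zero, zpow_neg_nat_one, show m + 3 - 1 = m + 2 by omega, hb]
    field_simp
    ring
  have hD1 : ∀ r > (0:ℝ), deriv V r = Wf1 ℓ a b m r := by
    intro r hr
    have hev : V =ᶠ[nhds r] Wf0 ℓ a b m :=
      Filter.eventuallyEq_of_mem (Ioi_mem_nhds hr) (fun x hx => hVW x hx)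
    rw [hev.deriv_eq, (Wf0_hasDerivAt ℓ a b m r hr.ne').deriv]
  have hD2 : ∀ r > (0:ℝ), deriv (deriv V) r = Wf2 ℓ a b m r := by
    intro r hr
    have hev : deriv V =ᶠ[nhds r] Wf1 ℓ a b m :=
      Filter.eventuallyEq_of_mem (Ioi_mem_nhds hr) (fun x hx => hD1 x hx)
    rw [hev.deriv_eq, (Wf1_hasDerivAt ℓ a b m r hr.ne').deriv]
  -- the polynomial obtained from clearing denominators
  set P : Polynomial ℝ :=
    Polynomial.C (4*((m:ℝ)+3)*((m:ℝ)+2) + 8*Λ*ℓ^2) * Polynomial.X^(2*m+6)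
      + Polynomial.C (a*(8*((m:ℝ)+2) + 8*Λ*ℓ^2)) * Polynomial.X^(m+4)
      + Polynomial.C (b*(2*((m:ℝ)+3)*((m:ℝ)+2) + 8*Λ*ℓ^2)) * Polynomial.X^(m+3)
      + Polynomial.C (((m:ℝ)+2)*a^2*(m:ℝ)^2) * Polynomial.X^2
      + Polynomial.C (2*a*b*((m:ℝ)+2)*((m:ℝ)+1)^2) * Polynomial.X
      + Polynomial.C (((m:ℝ)+2)*((m:ℝ)+3)*((m:ℝ)+1)*b^2)
      - Polynomial.C (ℓ^4*((m:ℝ)+2)*C) * Polynomial.X^(2*m+4) with hP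
  have hroot : ∀ r ∈ Set.Ioi rp, P.IsRoot r := by
    intro r hr
    have hr0 : (0:ℝ) < r := hrp.trans hr
    have h := hC r hr
    rw [hD1 r hr0, hD2 r hr0, hVW r hr0] at h
    push_cast at h
    have hid := key_id ℓ a b Λ C m hℓ' r hr0.ne'
    have h0 : 2 * (Wf2 ℓ a b m r + ((m:ℝ) + 3 - 2) * Wf1 ℓ a b m r / r) * Wf0 ℓ a b m r
        + (Wf1 ℓ a b m r)^2 + 8 * Λ / ((m:ℝ) + 3 - 1) * Wf0 ℓ a b m r - C = 0 := by
      rw [sub_eq_zero]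
      linarith [h]
    rw [Polynomial.IsRoot, hP]
    simp only [Polynomial.eval_add, Polynomial.eval_sub, Polynomial.eval_mul,
      Polynomial.eval_pow, Polynomial.eval_C, Polynomial.eval_X]
    rw [← hid, h0, zero_mul]
  have hP0 : P = 0 :=
    Polynomial.eq_zero_of_infinite_isRoot P
      ((Set.Ioi_infinite rp).mono (fun r hr => hroot r hr))
  have hev0 : P.eval 0 = ((m:ℝ)+2)*((m:ℝ)+3)*((m:ℝ)+1)*b^2 := by
    rw [hP]
    simp only [Polynomial.eval_add, Polynomial.eval_sub, Polynomial.eval_mul,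
      Polynomial.eval_pow, Polynomial.eval_C, Polynomial.eval_X]
    rw [zero_pow (by omega : 2*m+6 ≠ 0), zero_pow (by omega : m+4 ≠ 0),
      zero_pow (by omega : m+3 ≠ 0), zero_pow (by omega : 2*m+4 ≠ 0)]
    ring
  rw [hP0, Polynomial.eval_zero] at hev0
  have hpos : (0:ℝ) < ((m:ℝ)+2)*((m:ℝ)+3)*((m:ℝ)+1)*b^2 := by
    have : b ≠ 0 := by
      rw [hb]; intro hcontra
      have : r₀^(m+3) = 0 := by linarith [neg_eq_zero.mp hcontra]
      exact (pow_ne_zero (m+3) hr₀.ne') this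
    positivity
  rw [← hev0] at hpos
  exact lt_irrefl 0 hpos
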